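/- Fix an integer n ≥ 1 and assume sin(jθ) ≠ 0 for all integers 1 ≤ j ≤ n (so that the Galperin billiard position recursion is well defined up to index n). Then the positions satisfy the closed forms: for every k ≥ 1 with 2k ≤ n, X_{2k} = x_0·tan θ / sin(2kθ) and x_{2k} = 0; and for every k ≥ 0 with 2k+1 ≤ n, X_{2k+1} = x_{2k+1} = x_0·sin θ / sin((2k+1)θ), where θ = arctan(√(m/M)). -/

import Mathlib

/-- Closed forms for the positions of the Galperin billiard: for `2k ≤ n`
(with `k ≥ 1`), `X_{2k} = x_0 tan θ / sin(2kθ)` and `x_{2k} = 0`; and for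
`2k+1 ≤ n`, `X_{2k+1} = x_{2k+1} = x_0 sin θ / sin((2k+1)θ)`, where
`θ = arctan √(m/M)` and `sin(jθ) ≠ 0` for all `1 ≤ j ≤ n` (so the recursion is
well defined up to index `n`). -/
theorem galperin_position_closed_forms
    (M m : ℝ) (hM : 0 < M) (hm : 0 < m)
    (θ : ℝ) (hθ : θ = Real.arctan (Real.sqrt (m / M)))
    (n : ℕ) (hn : 1 ≤ n)
    (hsin : ∀ j : ℕ, 1 ≤ j → j ≤ n → Real.sin ((j : ℝ) * θ) ≠ 0)
    (V v X x : ℕ → ℝ)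
    (hV0 : 0 < V 0) (hv0 : v 0 = 0) (hX0x0 : X 0 < x 0) (hx0 : x 0 < 0)
    (hBBvel : ∀ k : ℕ,
      V (2 * k + 1) = ((M - m) * V (2 * k) + 2 * m * v (2 * k)) / (M + m) ∧
      v (2 * k + 1) = (2 * M * V (2 * k) + (m - M) * v (2 * k)) / (M + m))
    (hBWvel : ∀ k : ℕ, 1 ≤ k →
      V (2 * k) = V (2 * k - 1) ∧ v (2 * k) = -v (2 * k - 1))
    (hBBpos : ∀ k : ℕ, 2 * k + 1 ≤ n →
      X (2 * k + 1)
        = X (2 * k) + (X (2 * k) - x (2 * k)) * V (2 * k) / (v (2 * k) - V (2 * k)) ∧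
      x (2 * k + 1) = X (2 * k + 1))
    (hBWpos : ∀ k : ℕ, 1 ≤ k → 2 * k ≤ n →
      X (2 * k) = X (2 * k - 1) - (V (2 * k - 1) / v (2 * k - 1)) * x (2 * k - 1) ∧
      x (2 * k) = 0) :
    (∀ k : ℕ, 1 ≤ k → 2 * k ≤ n →
      X (2 * k) = x 0 * Real.tan θ / Real.sin (2 * (k : ℝ) * θ) ∧
      x (2 * k) = 0) ∧
    (∀ k : ℕ, 2 * k + 1 ≤ n →
      X (2 * k + 1) = x 0 * Real.sin θ / Real.sin ((2 * (k : ℝ) + 1) * θ) ∧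
      x (2 * k + 1) = X (2 * k + 1)) := by
  set s := Real.sin θ with hsdef
  set c := Real.cos θ with hcdef
  have hθpos : 0 < θ := by
    rw [hθ]
    have := Real.arctan_strictMono (Real.sqrt_pos.mpr (div_pos hm hM))
    rwa [Real.arctan_zero] at this
  have hθlt : θ < Real.pi / 2 := by rw [hθ]; exact Real.arctan_lt_pi_div_two _
  have hs : 0 < s := Real.sin_pos_of_pos_of_lt_pi hθpos
    (by linarith [Real.pi_pos])
  have hc : 0 < c := Real.cos_pos_of_mem_Ioo ⟨by linarith, hθlt⟩
  have hpyth : s ^ 2 + c ^ 2 = 1 := Real.sin_sq_add_cos_sq θ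
  have htan : Real.tan θ = s / c := Real.tan_eq_sin_div_cos θ
  have hmc : m * c ^ 2 = M * s ^ 2 := by
    have h1 : Real.tan θ ^ 2 = m / M := by
      rw [hθ, Real.tan_arctan, Real.sq_sqrt (le_of_lt (div_pos hm hM))]
    rw [htan, div_pow] at h1
    field_simp at h1
    linarith
  have hMm : M + m ≠ 0 := by positivity
  have hV0' : V 0 ≠ 0 := ne_of_gt hV0
  -- closed forms for velocities
  have hvel : ∀ k : ℕ,
      V (2 * k) = V 0 * Real.cos (2 * (k : ℝ) * θ) ∧
      v (2 * k) = -(V 0 * Real.sin (2 * (k : ℝ) * θ) * c / s) := by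
    intro k
    induction k with
    | zero => constructor <;> simp [hv0]
    | succ k ih =>
      obtain ⟨hVk, hvk⟩ := ih
      obtain ⟨hV1, hv1⟩ := hBBvel k
      obtain ⟨hV2, hv2⟩ := hBWvel (k + 1) (by omega)
      have hidx : 2 * (k + 1) - 1 = 2 * k + 1 := by omega
      rw [hidx] at hV2 hv2
      have hang : 2 * ((k : ℝ) + 1) * θ = 2 * (k : ℝ) * θ + (θ + θ) := by ring
      constructor
      · rw [hV2, hV1, hVk, hvk]
        push_cast
        rw [hang, Real.cos_add, Real.cos_add, Real.sin_add, ← hsdef, ← hcdef]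
        field_simp
        linear_combination (-2 * Real.cos (2 * (k : ℝ) * θ) * s -
            2 * Real.sin (2 * (k : ℝ) * θ) * c) * hmc +
          (-(M - m) * Real.cos (2 * (k : ℝ) * θ) * s +
            2 * m * Real.sin (2 * (k : ℝ) * θ) * c) * hpyth
      · rw [hv2, hv1, hVk, hvk]
        push_cast
        rw [hang, Real.sin_add, Real.cos_add, Real.sin_add, ← hsdef, ← hcdef]
        field_simp
        linear_combination (2 * Real.cos (2 * (k : ℝ) * θ) * s +
            2 * Real.sin (2 * (k : ℝ) * θ) * c) * hmc +
          (2 * M * Real.cos (2 * (k : ℝ) * θ) * s -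
            (m - M) * Real.sin (2 * (k : ℝ) * θ) * c) * hpyth
  -- main joint induction on positions
  have main : ∀ k : ℕ,
      (2 * k + 1 ≤ n →
        X (2 * k + 1) = x 0 * s / Real.sin ((2 * (k : ℝ) + 1) * θ) ∧
        x (2 * k + 1) = X (2 * k + 1)) ∧
      (1 ≤ k → 2 * k ≤ n →
        X (2 * k) = x 0 * (s / c) / Real.sin (2 * (k : ℝ) * θ) ∧
        x (2 * k) = 0) := by
    intro k
    induction k with
    | zero =>
      constructor
      · intro h1
        obtain ⟨hX1, hx1⟩ := hBBpos 0 h1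
        have hX1' : X (2 * 0 + 1) = x 0 := by
          rw [hX1, hv0]
          have hV00 : V (2 * 0) = V 0 := by norm_num
          rw [hV00]
          rw [zero_sub, div_neg, mul_div_assoc, div_self hV0', mul_one]
          ring
        refine ⟨?_, hx1⟩
        rw [hX1']
        have hang0 : (2 * ((0 : ℕ) : ℝ) + 1) * θ = θ := by push_cast; ring
        rw [hang0, ← hsdef, mul_div_assoc, div_self (ne_of_gt hs), mul_one]
      · intro h; omega
    | succ k ih =>
      obtain ⟨ihodd, _⟩ := ih
      -- even part at k+1
      have heven : 2 * (k + 1) ≤ n →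
          X (2 * (k + 1)) = x 0 * (s / c) / Real.sin (2 * ((k : ℝ) + 1) * θ) ∧
          x (2 * (k + 1)) = 0 := by
        intro h2
        obtain ⟨hXe, hxe⟩ := hBWpos (k + 1) (by omega) h2
        have hidx : 2 * (k + 1) - 1 = 2 * k + 1 := by omega
        rw [hidx] at hXe
        obtain ⟨hXo, hxo⟩ := ihodd (by omega)
        -- velocities at index 2k+1
        obtain ⟨hVe, hve⟩ := hvel (k + 1)
        obtain ⟨hVw, hvw⟩ := hBWvel (k + 1) (by omega)
        rw [hidx] at hVw hvw
        have hV1 : V (2 * k + 1) = V 0 * Real.cos (2 * ((k : ℝ) + 1) * θ) := by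
          rw [← hVw, hVe]; push_cast; ring_nf
        have hv1 : v (2 * k + 1) = V 0 * Real.sin (2 * ((k : ℝ) + 1) * θ) * c / s := by
          have := hvw
          rw [hve] at this
          have h' : v (2 * k + 1) = V 0 * Real.sin (2 * ((k + 1 : ℕ) : ℝ) * θ) * c / s := by
            linarith [this]
          rw [h']; push_cast; ring_nf
        refine ⟨?_, hxe⟩
        rw [hXe, hxo, hXo, hV1, hv1]
        have hang : 2 * ((k : ℝ) + 1) * θ = (2 * (k : ℝ) + 1) * θ + θ := by ring
        have hS1 : Real.sin ((2 * (k : ℝ) + 1) * θ) ≠ 0 := by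
          have := hsin (2 * k + 1) (by omega) (by omega)
          have hcast : ((2 * k + 1 : ℕ) : ℝ) * θ = (2 * (k : ℝ) + 1) * θ := by
            push_cast; ring
          rwa [hcast] at this
        have hS2 : Real.sin (2 * ((k : ℝ) + 1) * θ) ≠ 0 := by
          have := hsin (2 * (k + 1)) (by omega) (by omega)
          have hcast : ((2 * (k + 1) : ℕ) : ℝ) * θ = 2 * ((k : ℝ) + 1) * θ := by
            push_cast; ring
          rwa [hcast] at this
        rw [hang, Real.sin_add, Real.cos_add, ← hsdef, ← hcdef]
        rw [hang, Real.sin_add, ← hsdef, ← hcdef] at hS2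
        have hD : Real.sin ((2 * (k : ℝ) + 1) * θ) * c + s * Real.cos ((2 * (k : ℝ) + 1) * θ) ≠ 0 := by
          rwa [mul_comm s]
        field_simp
        linear_combination (x 0 * Real.sin ((2 * (k : ℝ) + 1) * θ)) * hpyth
      constructor
      · -- odd part at k+1
        intro h3
        obtain ⟨hXo, hxo⟩ := hBBpos (k + 1) (by omega)
        obtain ⟨hXe, hxe⟩ := heven (by omega)
        obtain ⟨hVe, hve⟩ := hvel (k + 1)
        refine ⟨?_, hxo⟩
        have hang : (2 * ((k : ℝ) + 1) + 1) * θ = 2 * ((k : ℝ) + 1) * θ + θ := by ring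
        have hS2 : Real.sin (2 * ((k : ℝ) + 1) * θ) ≠ 0 := by
          have := hsin (2 * (k + 1)) (by omega) (by omega)
          have hcast : ((2 * (k + 1) : ℕ) : ℝ) * θ = 2 * ((k : ℝ) + 1) * θ := by
            push_cast; ring
          rwa [hcast] at this
        have hS3 : Real.sin ((2 * ((k : ℝ) + 1) + 1) * θ) ≠ 0 := by
          have := hsin (2 * (k + 1) + 1) (by omega) (by omega)
          have hcast : ((2 * (k + 1) + 1 : ℕ) : ℝ) * θ = (2 * ((k : ℝ) + 1) + 1) * θ := by
            push_cast; ring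
          rwa [hcast] at this
        have hVe' : V (2 * (k + 1)) = V 0 * Real.cos (2 * ((k : ℝ) + 1) * θ) := by
          rw [hVe]; push_cast; ring_nf
        have hve' : v (2 * (k + 1)) = -(V 0 * Real.sin (2 * ((k : ℝ) + 1) * θ) * c / s) := by
          rw [hve]; push_cast; ring_nf
        -- goal : X (2*(k+1)+1) = x 0 * s / Real.sin ((2*(↑(k+1)) + 1)*θ)
        have hgoal : X (2 * (k + 1) + 1) = x 0 * s / Real.sin ((2 * ((k : ℝ) + 1) + 1) * θ) := by
          rw [hXo, hXe, hxe, hVe', hve']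
          rw [hang, Real.sin_add, ← hsdef, ← hcdef]
          rw [hang, Real.sin_add, ← hsdef, ← hcdef] at hS3
          have hvmV : -(V 0 * Real.sin (2 * ((k : ℝ) + 1) * θ) * c / s) -
              V 0 * Real.cos (2 * ((k : ℝ) + 1) * θ) =
              -(V 0 * (Real.sin (2 * ((k : ℝ) + 1) * θ) * c +
                Real.cos (2 * ((k : ℝ) + 1) * θ) * s) / s) := by
            field_simp; ring
          rw [hvmV]
          have hD : c * Real.sin (2 * ((k : ℝ) + 1) * θ) + s * Real.cos (2 * ((k : ℝ) + 1) * θ) ≠ 0 := by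
            rwa [mul_comm c, mul_comm s]
          field_simp
          ring_nf
        rw [hgoal]
        push_cast
        ring_nf
      · intro _ h2
        have h := heven h2
        refine ⟨?_, h.2⟩
        rw [h.1]
        push_cast
        ring_nf
  constructor
  · intro k hk h2
    obtain ⟨_, he⟩ := main k
    obtain ⟨h1, h2'⟩ := he hk h2
    exact ⟨by rw [h1, htan], h2'⟩
  · intro k h1
    obtain ⟨ho, _⟩ := main k
    exact ho h1
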